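/- Let A be a finite subset of an abelian group G with |A| ≥ 5, and suppose A is not an almost 2-coset. Then |2∧A| ≤ |A| if and only if |A + A| = |A|. -/

import Mathlib

open Finset Pointwise

/-- The set of sums of two distinct elements of `A`. -/
def twoSum {G : Type*} [AddCommGroup G] [DecidableEq G] (A : Finset G) : Finset G :=
  ((A ×ˢ A).filter fun p => p.1 ≠ p.2).image fun p => p.1 + p.2

/-- `A` is a 2-coset with exactly one element removed. -/
def IsAlmost2Coset {G : Type*} [AddCommGroup G] (A : Finset G) : Prop :=
  ∃ (H : AddSubgroup G) (g a : G), (∀ x ∈ H, x + x = 0) ∧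
    a ∈ (g +ᵥ (H : Set G)) ∧ (A : Set G) = (g +ᵥ (H : Set G)) \ {a}

section Aux

variable {G : Type*} [AddCommGroup G] [DecidableEq G]

lemma mem_twoSum' {A : Finset G} {s : G} :
    s ∈ twoSum A ↔ ∃ a ∈ A, ∃ b ∈ A, a ≠ b ∧ a + b = s := by
  simp only [twoSum, mem_image, mem_filter, mem_product, Prod.exists]
  constructor
  · rintro ⟨a, b, ⟨⟨ha, hb⟩, hne⟩, rfl⟩; exact ⟨a, ha, b, hb, hne, rfl⟩
  · rintro ⟨a, ha, b, hb, hne, rfl⟩; exact ⟨a, b, ⟨⟨ha, hb⟩, hne⟩, rfl⟩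

lemma add_mem_twoSum' {A : Finset G} {a b : G} (ha : a ∈ A) (hb : b ∈ A) (hne : a ≠ b) :
    a + b ∈ twoSum A := mem_twoSum'.2 ⟨a, ha, b, hb, hne, rfl⟩

lemma twoSum_subset' {A : Finset G} : twoSum A ⊆ A + A := by
  intro s hs
  obtain ⟨a, ha, b, hb, _, rfl⟩ := mem_twoSum'.1 hs
  exact add_mem_add ha hb

lemma mem_image_add {B : Finset G} {x t : G} : t ∈ B.image (· + x) ↔ t - x ∈ B := by
  simp only [mem_image]
  constructor
  · rintro ⟨y, hy, rfl⟩; simpa using hy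
  · intro h; exact ⟨t - x, h, by abel⟩

lemma image_sdiff_card {B : Finset G} {x : G} :
    (B \ B.image (· + x)).card = (B.image (· + x) \ B).card := by
  have hc : (B.image (· + x)).card = B.card := card_image_of_injective _ (add_left_injective x)
  have h1 := card_sdiff_add_card_inter B (B.image (· + x))
  have h2 := card_sdiff_add_card_inter (B.image (· + x)) B
  rw [inter_comm] at h2
  omega

end Aux
section Claim1
variable {G : Type*} [AddCommGroup G] [DecidableEq G]



lemma stab (B : Finset G) (hcl : ∀ x ∈ B, ∀ y ∈ B, x ≠ y → x + y ∈ B)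
    {w : G} (hw : w ∈ B) (hww : w + w ∈ B) : ∀ t ∈ B, t - w ∈ B := by
  have himg : B.image (· + w) ⊆ B := by
    intro t' ht'
    obtain ⟨y, hy, rfl⟩ := mem_image.1 ht'
    by_cases hyw : y = w
    · subst hyw; exact hww
    · exact hcl y hy w hw hyw
  have heq : B.image (· + w) = B := eq_of_subset_of_card_le himg
    (le_of_eq (card_image_of_injective _ (add_left_injective w)).symm)
  intro t ht
  rw [← heq] at ht
  exact mem_image_add.1 ht

lemma missing (B : Finset G) (hcl : ∀ x ∈ B, ∀ y ∈ B, x ≠ y → x + y ∈ B)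
    {p : G} (hp : p ∈ B) (hpp : p + p ∉ B) :
    ∃ u ∈ B, (∀ y ∈ B, y ≠ u → y - p ∈ B) ∧ (∀ v ∈ B, v - p ∉ B → v = u) ∧
      u + B.card • p = p + p := by
  set T := B.image (· + p) with hT
  have hTB : T \ B = {p + p} := by
    apply Subset.antisymm
    · intro t ht
      rw [mem_sdiff] at ht
      obtain ⟨y, hy, rfl⟩ := mem_image.1 ht.1
      by_cases hyp : y = p
      · subst hyp; exact mem_singleton_self _
      · exact absurd (hcl y hy p hp hyp) ht.2
    · intro t ht
      rw [mem_singleton] at ht; subst ht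
      exact mem_sdiff.2 ⟨mem_image.2 ⟨p, hp, rfl⟩, hpp⟩
  have hBT : (B \ T).card = 1 := by rw [image_sdiff_card, ← hT, hTB, card_singleton]
  obtain ⟨u, hu⟩ := card_eq_one.1 hBT
  have huB : u ∈ B := (mem_sdiff.1 (hu ▸ mem_singleton_self u)).1
  have huT : u ∉ T := (mem_sdiff.1 (hu ▸ mem_singleton_self u)).2
  refine ⟨u, huB, ?_, ?_, ?_⟩
  · intro y hy hyu
    have : y ∉ B \ T := by rw [hu, mem_singleton]; exact hyu
    have hyT : y ∈ T := by
      by_contra hc; exact this (mem_sdiff.2 ⟨hy, hc⟩)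
    exact mem_image_add.1 hyT
  · intro v hv hvp
    have : v ∈ B \ T := mem_sdiff.2 ⟨hv, fun hc => hvp (mem_image_add.1 hc)⟩
    rw [hu, mem_singleton] at this; exact this
  · have e3 : ∑ t ∈ T, t = (∑ y ∈ B, y) + B.card • p := by
      rw [hT, Finset.sum_image (by intro a _ b _ h; exact add_left_injective p h),
        Finset.sum_add_distrib, Finset.sum_const]
    have e1 : ∑ i ∈ T ∩ B, i + ∑ i ∈ T \ B, i = ∑ i ∈ T, i := Finset.sum_inter_add_sum_sdiff ..
    have e2 : ∑ i ∈ B ∩ T, i + ∑ i ∈ B \ T, i = ∑ i ∈ B, i := Finset.sum_inter_add_sum_sdiff ..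
    rw [hTB, sum_singleton] at e1
    rw [hu, sum_singleton, inter_comm] at e2
    have := e1.trans e3
    rw [← e2] at this
    -- this : ∑ i ∈ T ∩ B, i + (p+p) = (∑ i ∈ T ∩ B, i + u) + B.card • p
    have h' : p + p = u + B.card • p := by
      have := add_left_cancel (a := ∑ i ∈ T ∩ B, i)
        (b := p + p) (c := u + B.card • p) (by rw [this]; abel)
      exact this
    exact h'.symm

lemma Lstep (B : Finset G) (hcl : ∀ x ∈ B, ∀ y ∈ B, x ≠ y → x + y ∈ B)
    {p q up : G} (hp : p ∈ B) (hq : q ∈ B) (hpp : p + p ∉ B)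
    (hup1 : ∀ y ∈ B, y ≠ up → y - p ∈ B)
    (hqp : q ≠ p) (hqu : q ≠ up) :
    q - p ∈ B ∧ (q - p) + (q - p) ∉ B ∧ (p + q) + B.card • (q - p) = (q - p) + (q - p) := by
  have hr : q - p ∈ B := hup1 q hq hqu
  have hpq : p + q ∈ B := hcl p hp q hq (fun h => hqp h.symm)
  have hrr : (q - p) + (q - p) ∉ B := by
    intro hrr
    have := stab B hcl hr hrr (p + q) hpq
    have he : (p + q) - (q - p) = p + p := by abel
    rw [he] at this; exact hpp this
  obtain ⟨ur, _, _, hur2, hur3⟩ := missing B hcl hr hrr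
  have hpqur : p + q = ur := by
    apply hur2 (p + q) hpq
    have he : (p + q) - (q - p) = p + p := by abel
    rw [he]; exact hpp
  rw [← hpqur] at hur3
  exact ⟨hr, hrr, hur3⟩

lemma claim1 (B : Finset G) (h0 : (0:G) ∈ B) (hcard : 5 ≤ B.card)
    (hcl : ∀ x ∈ B, ∀ y ∈ B, x ≠ y → x + y ∈ B) : ∀ x ∈ B, x + x ∈ B := by
  by_contra hcon
  push_neg at hcon
  obtain ⟨x, hx, hxx⟩ := hcon
  have pick : ∀ s : Finset G, s.card ≤ 4 → ∃ y ∈ B, y ∉ s := by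
    intro s hs
    have h1 : B.card - s.card ≤ (B \ s).card := le_card_sdiff s B
    have : 0 < (B \ s).card := by omega
    obtain ⟨y, hy⟩ := card_pos.1 this
    exact ⟨y, (mem_sdiff.1 hy).1, (mem_sdiff.1 hy).2⟩
  obtain ⟨ux, huxB, hux1, hux2, _⟩ := missing B hcl hx hxx
  obtain ⟨y1, hy1B, hy1⟩ := pick {x, ux, 0} ((card_le_three ..).trans (by norm_num))
  simp only [mem_insert, mem_singleton, not_or] at hy1
  obtain ⟨hy1x, hy1u, hy10⟩ := hy1
  obtain ⟨hz1B, hz1bad, _⟩ := Lstep B hcl hx hy1B hxx hux1 hy1x hy1u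
  set z1 := y1 - x with hz1
  -- u(z1) = x + y1
  obtain ⟨u1, _, hu11, hu12, _⟩ := missing B hcl hz1B hz1bad
  have hxy1B : x + y1 ∈ B := hcl x hx y1 hy1B (fun h => hy1x h.symm)
  have hu1val : x + y1 = u1 := by
    apply hu12 _ hxy1B
    have he : (x + y1) - z1 = x + x := by rw [hz1]; abel
    rw [he]; exact hxx
  have hxz1 : x ≠ z1 := by
    intro h
    rw [hz1] at h
    have h2 : y1 = x + x := sub_eq_iff_eq_add.1 h.symm
    rw [← h2] at hxx
    exact hxx hy1B
  have hxu1 : x ≠ u1 := by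
    rw [← hu1val]
    intro h
    exact hy10 (add_eq_left.mp h.symm)
  obtain ⟨_, _, E2⟩ := Lstep B hcl hz1B hx hz1bad hu11 hxz1 hxu1
  obtain ⟨w0, hw0B, hw0⟩ := pick {x, ux, z1, u1} (card_le_four ..)
  simp only [mem_insert, mem_singleton, not_or] at hw0
  obtain ⟨hw0x, hw0ux, hw0z1, hw0u1⟩ := hw0
  obtain ⟨_, _, E3⟩ := Lstep B hcl hx hw0B hxx hux1 hw0x hw0ux
  obtain ⟨_, _, E4⟩ := Lstep B hcl hz1B hw0B hz1bad hu11 hw0z1 hw0u1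
  -- algebra
  set N : ℤ := (B.card : ℤ) with hN
  have conv : ∀ a : G, B.card • a = N • a := fun a => (natCast_zsmul a B.card).symm
  have hA : ∀ p q : G, (p + q) + B.card • (q - p) = (q - p) + (q - p) →
      (N - 1) • q = (N - 3) • p := by
    intro p q hE
    rw [conv] at hE
    have key : (N-1)•q - (N-3)•p = ((p + q) + N•(q-p)) - ((q-p)+(q-p)) := by module
    rw [hE, sub_self] at key
    exact sub_eq_zero.1 key
  have A2 := hA z1 x E2
  have A3 := hA x w0 E3
  have A4 := hA z1 w0 E4
  have h5 : (N - 3) • x = (N - 3) • z1 := A3.symm.trans A4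
  have h6 : (N - 1) • x = (N - 3) • x := A2.trans h5.symm
  have h7 : x + x = 0 := by
    have : (2:ℤ) • x = (N-1)•x - (N-3)•x := by module
    rw [h6, sub_self, two_zsmul] at this
    exact this
  rw [h7] at hxx
  exact hxx h0
end Claim1

section Claim2a
variable {G : Type*} [AddCommGroup G] [DecidableEq G]

lemma claim2a (B : Finset G) (σ : G) (h0 : (0:G) ∈ B) (hσ : σ ∉ B) (hcard : 5 ≤ B.card)
    (H2 : ∀ x ∈ B, ∀ y ∈ B, x ≠ y → x + y ∈ B ∨ x + y = σ)
    (H3 : ∀ x ∈ B, ∀ y ∈ B, x ≠ y → ∀ c ∈ B, x + y ≠ c + c)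
    (H4 : ∀ c ∈ B, c + c = 0 ∨ c + c ∉ B) :
    ∀ c ∈ B, c + c = 0 := by
  by_contra hcon
  push_neg at hcon
  obtain ⟨x0, hx0B, hx0⟩ := hcon
  have hbadnB : ∀ c ∈ B, c + c ≠ 0 → c + c ∉ B := fun c hc h => (H4 c hc).resolve_left h
  have N1 : ∀ t ∈ B, -t ∈ B → t + t = 0 := by
    intro t ht hnt
    by_cases h : t = -t
    · nth_rewrite 2 [h]
      exact add_neg_cancel t
    · exact absurd (by rw [add_neg_cancel, add_zero]) (H3 t ht (-t) hnt h 0 h0)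
  have G1 : ∀ x ∈ B, x + x ≠ 0 → ∀ z ∈ B, z + z = 0 → z ≠ 0 → x + z = σ ∨ x + x + z = σ := by
    intro x hx hxbad z hz hz2 hz0
    have hxz : x ≠ z := fun h => hxbad (h ▸ hz2)
    rcases H2 x hx z hz hxz with hy | hyσ
    · have hxy : x ≠ x + z := fun h => hz0 (add_eq_left.mp h.symm)
      rcases H2 x hx (x+z) hy hxy with hw | hwσ
      · exfalso
        have hwz : x + (x + z) ≠ z := by
          intro h
          apply hxbad
          have h2 : (x + x) + z = 0 + z := by
            rw [zero_add]
            calc (x + x) + z = x + (x + z) := by abel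
            _ = z := h
          exact add_right_cancel h2
        apply H3 (x + (x+z)) hw z hz hwz x hx
        have h3 : (x + (x+z)) + z = (x+x) + (z+z) := by abel
        rw [h3, hz2, add_zero]
      · right
        rw [← hwσ]; abel
    · left; exact hyσ
  have B1 : ∀ x ∈ B, x + x ≠ 0 → ∀ m ∈ B, m + m = 0 → x + m ≠ σ := by
    intro x hx hxbad m hm hm2 hxm
    have hm0 : m ≠ 0 := by
      intro h
      rw [h, add_zero] at hxm
      exact hσ (hxm ▸ hx)
    have hbade : ∀ y ∈ B, y + y ≠ 0 → y = x := by
      intro y hy hybad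
      rcases G1 y hy hybad m hm hm2 hm0 with h1 | h2
      · exact add_right_cancel (h1.trans hxm.symm)
      · exfalso
        have hyx : y + y = x := add_right_cancel (h2.trans hxm.symm)
        exact hbadnB y hy hybad (hyx ▸ hx)
    have hsub : B ⊆ {x, 0, σ - x, σ - (x + x)} := by
      intro b hb
      simp only [mem_insert, mem_singleton]
      by_cases hb2 : b + b = 0
      · by_cases hb0 : b = 0
        · right; left; exact hb0
        · rcases G1 x hx hxbad b hb hb2 hb0 with h1 | h2
          · right; right; left; rw [← h1]; abel
          · right; right; right; rw [← h2]; abel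
      · left; exact hbade b hb hb2
    have := (card_le_card hsub).trans (card_le_four ..)
    omega
  by_cases hGd : ∀ z ∈ B, z + z = 0 → z = 0
  · -- C0: all nonzero bad
    have hneg : ∀ t ∈ B, t ≠ 0 → -t ∉ B := by
      intro t ht hne hmem
      exact hne (hGd t ht (N1 t ht hmem))
    have key1 : ∀ x ∈ B, ∀ t ∈ B, x ≠ t → t - x ∉ B ∨ x - t ∉ B := by
      intro x hx t ht hxt
      by_contra hc
      push_neg at hc
      obtain ⟨h1, h2⟩ := hc
      have hng : -(t - x) = x - t := by abel
      have h3 := N1 (t - x) h1 (by rw [hng]; exact h2)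
      exact hxt (sub_eq_zero.mp (hGd _ h1 h3)).symm
    have key2 : ∀ x ∈ B, x ≠ 0 → ∀ t ∈ B, ∀ t' ∈ B, t ≠ 0 → t' ≠ 0 →
        t - x ∉ B → t' - x ∉ B → t = t' := by
      intro x hx hx0 t ht t' ht' ht0 ht'0 htx ht'x
      have hUcard : (B \ B.image (· + x)).card ≤ 2 := by
        rw [image_sdiff_card]
        refine (card_le_card ?_).trans (card_le_two (a := x + x) (b := σ))
        intro s hs
        rw [mem_sdiff] at hs
        obtain ⟨y, hy, rfl⟩ := mem_image.1 hs.1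
        by_cases hyx : y = x
        · subst hyx; simp
        · rcases H2 y hy x hx hyx with hB | hσ'
          · exact absurd hB hs.2
          · simp [hσ']
      have h0U : (0:G) ∈ B \ B.image (· + x) := by
        refine mem_sdiff.2 ⟨h0, fun hc => ?_⟩
        have := mem_image_add.1 hc
        rw [zero_sub] at this
        exact hneg x hx hx0 this
      have htU : t ∈ B \ B.image (· + x) :=
        mem_sdiff.2 ⟨ht, fun hc => htx (mem_image_add.1 hc)⟩
      have ht'U : t' ∈ B \ B.image (· + x) :=
        mem_sdiff.2 ⟨ht', fun hc => ht'x (mem_image_add.1 hc)⟩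
      by_contra hne
      have hsub3 : {(0:G), t, t'} ⊆ B \ B.image (· + x) := by
        intro s hs
        simp only [mem_insert, mem_singleton] at hs
        rcases hs with rfl | rfl | rfl
        · exact h0U
        · exact htU
        · exact ht'U
      have hc3 : ({(0:G), t, t'} : Finset G).card = 3 := by
        rw [card_insert_of_notMem, card_insert_of_notMem, card_singleton]
        · simp [hne]
        · simp only [mem_insert, mem_singleton, not_or]
          exact ⟨fun h => ht0 h.symm, fun h => ht'0 h.symm⟩
      have := card_le_card hsub3
      omega
    -- pick four distinct nonzero elements
    have hc1 : 4 ≤ (B.erase 0).card := by rw [card_erase_of_mem h0]; omega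
    obtain ⟨a, ha⟩ := card_pos.1 (by omega : 0 < (B.erase 0).card)
    have hc2 : 3 ≤ ((B.erase 0).erase a).card := by rw [card_erase_of_mem ha]; omega
    obtain ⟨b, hb⟩ := card_pos.1 (by omega : 0 < ((B.erase 0).erase a).card)
    have hc3 : 2 ≤ (((B.erase 0).erase a).erase b).card := by rw [card_erase_of_mem hb]; omega
    obtain ⟨c, hc⟩ := card_pos.1 (by omega : 0 < (((B.erase 0).erase a).erase b).card)
    have hc4 : 1 ≤ ((((B.erase 0).erase a).erase b).erase c).card := by
      rw [card_erase_of_mem hc]; omega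
    obtain ⟨d, hd⟩ := card_pos.1 (by omega : 0 < ((((B.erase 0).erase a).erase b).erase c).card)
    -- unpack memberships
    have hdc : d ≠ c := ne_of_mem_erase hd
    have hd' := mem_of_mem_erase hd
    have hdb : d ≠ b := ne_of_mem_erase hd'
    have hd'' := mem_of_mem_erase hd'
    have hda : d ≠ a := ne_of_mem_erase hd''
    have hd0 : d ≠ 0 := ne_of_mem_erase (mem_of_mem_erase hd'')
    have hdB : d ∈ B := mem_of_mem_erase (mem_of_mem_erase hd'')
    have hcb : c ≠ b := ne_of_mem_erase hc
    have hc' := mem_of_mem_erase hc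
    have hca : c ≠ a := ne_of_mem_erase hc'
    have hc0 : c ≠ 0 := ne_of_mem_erase (mem_of_mem_erase hc')
    have hcB : c ∈ B := mem_of_mem_erase (mem_of_mem_erase hc')
    have hba : b ≠ a := ne_of_mem_erase hb
    have hb0 : b ≠ 0 := ne_of_mem_erase (mem_of_mem_erase hb)
    have hbB : b ∈ B := mem_of_mem_erase (mem_of_mem_erase hb)
    have ha0 : a ≠ 0 := ne_of_mem_erase ha
    have haB : a ∈ B := mem_of_mem_erase ha
    have K2 : ∀ u ∈ B, u ≠ 0 → ∀ v ∈ B, ∀ w ∈ B, v ≠ 0 → w ≠ 0 → v ≠ w →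
        v - u ∉ B → w - u ∉ B → False := by
      intro u hu hu0 v hv w hw hv0 hw0 hvw h1 h2
      exact hvw (key2 u hu hu0 v hv w hw hv0 hw0 h1 h2)
    rcases key1 a haB b hbB (fun h => hba h.symm) with Qab | Qba
    · rcases key1 a haB c hcB (fun h => hca h.symm) with Qac | Qca
      · exact K2 a haB ha0 b hbB c hcB hb0 hc0 (fun h => hcb h.symm) Qab Qac
      · rcases key1 a haB d hdB (fun h => hda h.symm) with Qad | Qda
        · exact K2 a haB ha0 b hbB d hdB hb0 hd0 (fun h => hdb h.symm) Qab Qad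
        · rcases key1 c hcB d hdB (fun h => hdc h.symm) with Qcd | Qdc
          · exact K2 c hcB hc0 a haB d hdB ha0 hd0 (fun h => hda h.symm) Qca Qcd
          · exact K2 d hdB hd0 a haB c hcB ha0 hc0 (fun h => hca h.symm) Qda Qdc
    · rcases key1 a haB c hcB (fun h => hca h.symm) with Qac | Qca
      · rcases key1 a haB d hdB (fun h => hda h.symm) with Qad | Qda
        · exact K2 a haB ha0 c hcB d hdB hc0 hd0 (fun h => hdc h.symm) Qac Qad
        · rcases key1 b hbB d hdB (fun h => hdb h.symm) with Qbd | Qdb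
          · exact K2 b hbB hb0 a haB d hdB ha0 hd0 (fun h => hda h.symm) Qba Qbd
          · exact K2 d hdB hd0 a haB b hbB ha0 hb0 (fun h => hba h.symm) Qda Qdb
      · rcases key1 b hbB c hcB (fun h => hcb h.symm) with Qbc | Qcb
        · exact K2 b hbB hb0 a haB c hcB ha0 hc0 (fun h => hca h.symm) Qba Qbc
        · exact K2 c hcB hc0 a haB b hbB ha0 hb0 (fun h => hba h.symm) Qca Qcb
  · -- good nonzero g exists
    push_neg at hGd
    obtain ⟨g, hgB, hg2, hg0⟩ := hGd
    have step1 : ∀ x ∈ B, x + x ≠ 0 → x + x + g = σ := by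
      intro x hx hxbad
      rcases G1 x hx hxbad g hgB hg2 hg0 with h1 | h2
      · exact absurd h1 (B1 x hx hxbad g hgB hg2)
      · exact h2
    have hgood : ∀ z ∈ B, z + z = 0 → z = 0 ∨ z = g := by
      intro z hz hz2
      by_cases hz0 : z = 0
      · left; exact hz0
      · right
        rcases G1 x0 hx0B hx0 z hz hz2 hz0 with h1 | h2
        · exact absurd h1 (B1 x0 hx0B hx0 z hz hz2)
        · exact add_left_cancel (h2.trans (step1 x0 hx0B hx0).symm)
    have step2 : ∀ t ∈ B, t + t ≠ 0 → t ≠ x0 → x0 + t = g ∨ x0 + t = σ := by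
      intro t ht htbad htx
      rcases H2 x0 hx0B t ht (fun h => htx h.symm) with hs | hsσ
      · by_cases hs2 : (x0 + t) + (x0 + t) = 0
        · rcases hgood _ hs hs2 with h | h
          · exfalso
            apply H3 x0 hx0B t ht (fun h' => htx h'.symm) 0 h0
            rw [h, add_zero]
          · left; exact h
        · exfalso
          have e1 := step1 _ hs hs2
          have e2 := step1 x0 hx0B hx0
          have e3 := step1 t ht htbad
          have c1 : (x0+t)+(x0+t) = x0 + x0 := add_right_cancel (e1.trans e2.symm)
          have c2 : (x0 + x0) + (t + t) = (x0 + x0) + 0 := by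
            rw [add_zero]
            conv_rhs => rw [← c1]
            abel
          exact htbad (add_left_cancel c2)
      · right; exact hsσ
    have hsub : B ⊆ {0, g, x0, g - x0, σ - x0} := by
      intro b hb
      simp only [mem_insert, mem_singleton]
      by_cases hb2 : b + b = 0
      · rcases hgood b hb hb2 with h | h
        · left; exact h
        · right; left; exact h
      · by_cases hbx : b = x0
        · right; right; left; exact hbx
        · rcases step2 b hb hb2 hbx with h | h
          · right; right; right; left; rw [← h]; abel
          · right; right; right; right; rw [← h]; abel
    have hBeq : B = {0, g, x0, g - x0, σ - x0} :=
      eq_of_subset_of_card_le hsub (le_trans (card_le_five ..) hcard)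
    have hy1 : g - x0 ∈ B := by rw [hBeq]; simp
    have hy2 : σ - x0 ∈ B := by rw [hBeq]; simp
    have hy12 : g - x0 ≠ σ - x0 := by
      intro h
      have hgσ : g = σ := by
        have := congrArg (· + x0) h
        simpa using this
      exact hσ (hgσ ▸ hgB)
    apply H3 _ hy1 _ hy2 hy12 0 h0
    have e2 := step1 x0 hx0B hx0
    have hcalc : (g - x0) + (σ - x0) = g + g := by rw [← e2]; abel
    rw [hcalc, hg2, add_zero]
end Claim2a
theorem stmt3 {G : Type*} [AddCommGroup G] [DecidableEq G] (A : Finset G)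
    (hA : 5 ≤ A.card) (h : ¬ IsAlmost2Coset A) :
    (twoSum A).card ≤ A.card ↔ (A + A).card = A.card := by
  have hApos : A.Nonempty := card_pos.1 (by omega)
  obtain ⟨a0, ha0⟩ := hApos
  have hAA_ge : A.card ≤ (A + A).card := card_le_card_add_right ⟨a0, ha0⟩
  constructor
  swap
  · intro heq
    calc (twoSum A).card ≤ (A + A).card := card_le_card twoSum_subset'
    _ = A.card := heq
  intro hle
  refine le_antisymm ?_ hAA_ge
  by_cases hI : ∃ a ∈ A, a + a ∈ twoSum A
  · -- Case I : some double is a distinct sum; then A is a coset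
    obtain ⟨a1, ha1, ha1S⟩ := hI
    have himg : A.image (· + a1) ⊆ twoSum A := by
      intro t ht
      obtain ⟨y, hy, rfl⟩ := mem_image.1 ht
      by_cases hya : y = a1
      · subst hya; exact ha1S
      · exact add_mem_twoSum' hy ha1 hya
    have hScard : (A.image (· + a1)).card = A.card :=
      card_image_of_injective _ (add_left_injective a1)
    have hSeq : A.image (· + a1) = twoSum A :=
      eq_of_subset_of_card_le himg (by omega)
    set B := A.image (· + (-a1)) with hB
    have hmemB : ∀ x : G, x ∈ B ↔ x + a1 ∈ A := by
      intro x
      rw [hB]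
      simp only [mem_image]
      constructor
      · rintro ⟨y, hy, rfl⟩
        simpa using hy
      · intro hx
        exact ⟨x + a1, hx, by abel⟩
    have h0B : (0:G) ∈ B := (hmemB 0).2 (by simpa using ha1)
    have hcardB : B.card = A.card := card_image_of_injective _ (add_left_injective (-a1))
    have hclB : ∀ x ∈ B, ∀ y ∈ B, x ≠ y → x + y ∈ B := by
      intro x hx y hy hxy
      have hx' := (hmemB x).1 hx
      have hy' := (hmemB y).1 hy
      have hne : x + a1 ≠ y + a1 := fun hc => hxy (add_right_cancel hc)
      have hsum : (x + a1) + (y + a1) ∈ twoSum A := add_mem_twoSum' hx' hy' hne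
      rw [← hSeq] at hsum
      obtain ⟨c, hc, hceq⟩ := mem_image.1 hsum
      refine (hmemB (x + y)).2 ?_
      have : x + y + a1 = c := by
        have h2 : c + a1 = (x + y + a1) + a1 := by rw [hceq]; abel
        exact (add_right_cancel h2).symm
      rw [this]; exact hc
    have hdbl := claim1 B h0B (by omega) hclB
    have hAA : A + A ⊆ A.image (· + a1) := by
      intro t ht
      obtain ⟨p, hp, q, hq, rfl⟩ := mem_add.1 ht
      have hpB : p + (-a1) ∈ B := mem_image_of_mem _ hp
      have hqB : q + (-a1) ∈ B := mem_image_of_mem _ hq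
      by_cases hpq : p = q
      · subst hpq
        have := hdbl _ hpB
        have hmem := (hmemB _).1 this
        refine mem_image.2 ⟨p + -a1 + (p + -a1) + a1, hmem, by abel⟩
      · have hne : p + (-a1) ≠ q + (-a1) := fun hc => hpq (add_right_cancel hc)
        have := hclB _ hpB _ hqB hne
        have hmem := (hmemB _).1 this
        refine mem_image.2 ⟨p + -a1 + (q + -a1) + a1, hmem, by abel⟩
    calc (A + A).card ≤ (A.image (· + a1)).card := card_le_card hAA
    _ = A.card := hScard
  · push_neg at hI
    -- lower bound on |twoSum A|
    have hlb : ∀ a ∈ A, ((A.erase a).image (· + a)).card = A.card - 1 ∧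
        (A.erase a).image (· + a) ⊆ twoSum A := by
      intro a ha
      constructor
      · rw [card_image_of_injective _ (add_left_injective a), card_erase_of_mem ha]
      · intro t ht
        obtain ⟨y, hy, rfl⟩ := mem_image.1 ht
        exact add_mem_twoSum' (mem_of_mem_erase hy) ha (ne_of_mem_erase hy)
    have hSlb : A.card - 1 ≤ (twoSum A).card := by
      obtain ⟨hc, hs⟩ := hlb a0 ha0
      calc A.card - 1 = ((A.erase a0).image (· + a0)).card := hc.symm
      _ ≤ (twoSum A).card := card_le_card hs
    rcases (by omega : (twoSum A).card + 1 = A.card ∨ (twoSum A).card = A.card) with hn | hn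
    · -- |S| = n - 1
      have hSa : ∀ a ∈ A, twoSum A = (A.erase a).image (· + a) := by
        intro a ha
        obtain ⟨hc, hs⟩ := hlb a ha
        exact (eq_of_subset_of_card_le hs (by omega)).symm
      have SL : ∀ a ∈ A, ∀ b ∈ A, ∀ x ∈ A, x ≠ a → x + a - b ∈ A := by
        intro a ha b hb x hx hxa
        have hmem : x + a ∈ twoSum A := add_mem_twoSum' hx ha hxa
        rw [hSa b hb] at hmem
        obtain ⟨c, hc, hceq⟩ := mem_image.1 hmem
        have hval : x + a - b = c := by rw [← hceq]; abel
        rw [hval]; exact mem_of_mem_erase hc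
      have h2a : ∀ a ∈ A, ∀ b ∈ A, a + a = b + b := by
        intro a ha b hb
        by_cases hab : a = b
        · rw [hab]
        · by_contra hne
          have hc2 : ({a, b} : Finset G).card ≤ 2 := card_le_two ..
          have hcpick : 0 < (A \ {a, b}).card := by
            have := le_card_sdiff ({a, b} : Finset G) A
            omega
          obtain ⟨c, hcmem⟩ := card_pos.1 hcpick
          rw [mem_sdiff] at hcmem
          obtain ⟨hcA, hcne⟩ := hcmem
          simp only [mem_insert, mem_singleton, not_or] at hcne
          obtain ⟨hca, hcb⟩ := hcne
          have hd : c + a - b ∈ A := SL a ha b hb c hcA hca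
          have hdne : c + a - b ≠ a := by
            intro hc'
            apply hcb
            have h2 : c + a = a + b := sub_eq_iff_eq_add.1 hc'
            exact add_right_cancel (h2.trans (add_comm a b))
          have he : (c + a - b) + a - c ∈ A := SL a ha c hcA _ hd hdne
          have heval : (c + a - b) + a - c = a + a - b := by abel
          rw [heval] at he
          have heb : a + a - b ≠ b := fun hc' => hne (sub_eq_iff_eq_add.1 hc')
          have hfin : (a + a - b) + b ∈ twoSum A := add_mem_twoSum' he hb heb
          have hv : (a + a - b) + b = a + a := by abel
          rw [hv] at hfin
          exact hI a ha hfin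
      have hAA : A + A ⊆ A.image (· + a0) := by
        intro t ht
        obtain ⟨p, hp, q, hq, rfl⟩ := mem_add.1 ht
        by_cases hpq : p = q
        · subst hpq
          exact mem_image.2 ⟨a0, ha0, h2a a0 ha0 p hp⟩
        · exact mem_image.2 ⟨p + q - a0, SL q hq a0 ha0 p hp hpq, by abel⟩
      calc (A + A).card ≤ (A.image (· + a0)).card := card_le_card hAA
      _ = A.card := card_image_of_injective _ (add_left_injective a0)
    · -- |S| = n : almost 2-coset, contradiction
      exfalso
      apply h
      obtain ⟨hc0, hs0⟩ := hlb a0 ha0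
      have hsd : (twoSum A \ (A.erase a0).image (· + a0)).card = 1 := by
        rw [card_sdiff_of_subset hs0]; omega
      obtain ⟨s, hs⟩ := card_eq_one.1 hsd
      have hsS : s ∈ twoSum A := (mem_sdiff.1 (hs ▸ mem_singleton_self s)).1
      have hsP : s ∉ (A.erase a0).image (· + a0) := (mem_sdiff.1 (hs ▸ mem_singleton_self s)).2
      have hSsub : ∀ t ∈ twoSum A, t ≠ s → t ∈ (A.erase a0).image (· + a0) := by
        intro t ht hts
        by_contra hc
        have hmem : t ∈ twoSum A \ (A.erase a0).image (· + a0) := mem_sdiff.2 ⟨ht, hc⟩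
        rw [hs, mem_singleton] at hmem
        exact hts hmem
      set B := A.image (· + (-a0)) with hB
      set σ := s - (a0 + a0) with hσdef
      have hmemB : ∀ x : G, x ∈ B ↔ x + a0 ∈ A := by
        intro x
        rw [hB]
        simp only [mem_image]
        constructor
        · rintro ⟨y, hy, rfl⟩; simpa using hy
        · intro hx; exact ⟨x + a0, hx, by abel⟩
      have h0B : (0:G) ∈ B := (hmemB 0).2 (by simpa using ha0)
      have hcardB : B.card = A.card := card_image_of_injective _ (add_left_injective (-a0))
      have hσB : σ ∉ B := by
        intro hc
        have hσA : σ + a0 ∈ A := (hmemB σ).1 hc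
        have hne : σ + a0 ≠ a0 := by
          intro hc2
          have hσ0 : σ = 0 := add_eq_right.1 hc2
          rw [hσdef] at hσ0
          have hseq : s = a0 + a0 := by
            have := sub_eq_zero.1 hσ0; exact this
          exact hI a0 ha0 (hseq ▸ hsS)
        apply hsP
        refine mem_image.2 ⟨σ + a0, mem_erase.2 ⟨hne, hσA⟩, ?_⟩
        rw [hσdef]; abel
      have H2 : ∀ x ∈ B, ∀ y ∈ B, x ≠ y → x + y ∈ B ∨ x + y = σ := by
        intro x hx y hy hxy
        have hx' := (hmemB x).1 hx
        have hy' := (hmemB y).1 hy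
        have hne : x + a0 ≠ y + a0 := fun hc => hxy (add_right_cancel hc)
        have hsum : (x + a0) + (y + a0) ∈ twoSum A := add_mem_twoSum' hx' hy' hne
        by_cases hcs : (x + a0) + (y + a0) = s
        · right; rw [hσdef, ← hcs]; abel
        · left
          obtain ⟨c, hc, hceq⟩ := mem_image.1 (hSsub _ hsum hcs)
          refine (hmemB _).2 ?_
          have hval : x + y + a0 = c := by
            have h2 : c + a0 = (x + y + a0) + a0 := by rw [hceq]; abel
            exact (add_right_cancel h2).symm
          rw [hval]; exact mem_of_mem_erase hc
      have H3 : ∀ x ∈ B, ∀ y ∈ B, x ≠ y → ∀ c ∈ B, x + y ≠ c + c := by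
        intro x hx y hy hxy c hc hceq
        have hx' := (hmemB x).1 hx
        have hy' := (hmemB y).1 hy
        have hc' := (hmemB c).1 hc
        have hne : x + a0 ≠ y + a0 := fun h2 => hxy (add_right_cancel h2)
        have hsum : (x + a0) + (y + a0) ∈ twoSum A := add_mem_twoSum' hx' hy' hne
        have hval : (x + a0) + (y + a0) = (c + a0) + (c + a0) := by
          calc (x + a0) + (y + a0) = (x + y) + (a0 + a0) := by abel
          _ = (c + c) + (a0 + a0) := by rw [hceq]
          _ = (c + a0) + (c + a0) := by abel
        rw [hval] at hsum
        exact hI (c + a0) hc' hsum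
      have H4 : ∀ c ∈ B, c + c = 0 ∨ c + c ∉ B := by
        intro c hc
        by_cases hc2 : c + c = 0
        · left; exact hc2
        · right
          intro hmem
          have hcc' := (hmemB _).1 hmem
          have hc' := (hmemB c).1 hc
          have hne : (c + c) + a0 ≠ a0 := fun h2 => hc2 (add_eq_right.1 h2)
          have hsum : ((c + c) + a0) + a0 ∈ twoSum A := add_mem_twoSum' hcc' ha0 hne
          have hval : ((c + c) + a0) + a0 = (c + a0) + (c + a0) := by abel
          rw [hval] at hsum
          exact hI (c + a0) hc' hsum
      have htwo := claim2a B σ h0B hσB (by omega) H2 H3 H4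
      obtain ⟨p', hp', q', hq', hpq', hpqs⟩ := mem_twoSum'.1 hsS
      have hpB : p' + (-a0) ∈ B := mem_image_of_mem _ hp'
      have hqB : q' + (-a0) ∈ B := mem_image_of_mem _ hq'
      have hpqB : p' + (-a0) ≠ q' + (-a0) := fun h2 => hpq' (add_right_cancel h2)
      have hpqσ : (p' + (-a0)) + (q' + (-a0)) = σ := by
        rw [hσdef, ← hpqs]; abel
      set p := p' + (-a0) with hpdef
      set q := q' + (-a0) with hqdef
      have hnegp : -p = p := neg_eq_of_add_eq_zero_left (htwo p hpB)
      have hb : ∀ x ∈ B, x ≠ 0 → x + σ ∈ B := by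
        intro x hx hx0
        by_cases hxp : x = p
        · rw [hxp, ← hpqσ]
          have he : p + (p + q) = (p + p) + q := by abel
          rw [he, htwo p hpB, zero_add]
          exact hqB
        · by_cases hxq : x = q
          · rw [hxq, ← hpqσ]
            have he : q + (p + q) = (q + q) + p := by abel
            rw [he, htwo q hqB, zero_add]
            exact hpB
          · rcases H2 x hx p hpB hxp with ht | htσ
            · have htq : x + p ≠ q := by
                intro h2
                have hxval : x = q + (-p) := by rw [← h2]; abel
                rw [hnegp] at hxval
                have hxσ : x = σ := by rw [hxval, add_comm, hpqσ]
                exact hσB (hxσ ▸ hx)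
              rcases H2 _ ht q hqB htq with hf | hfσ
              · have he : (x + p) + q = x + σ := by rw [← hpqσ]; abel
                rw [← he]
                exact hf
              · exfalso
                apply hx0
                have he : x + σ = σ := by
                  rw [← hpqσ]
                  calc x + (p + q) = (x + p) + q := by abel
                  _ = σ := hfσ
                  _ = p + q := hpqσ.symm
                exact add_eq_right.1 he
            · exfalso
              apply hxq
              have he : x + p = q + p := by
                rw [htσ, ← hpqσ]; abel
              exact add_right_cancel he
      have hσσ : σ + σ = 0 := by
        rw [← hpqσ]
        have he : (p + q) + (p + q) = (p + p) + (q + q) := by abel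
        rw [he, htwo p hpB, htwo q hqB, add_zero]
      set Hf := insert σ B with hHf
      have htorH : ∀ x ∈ Hf, x + x = 0 := by
        intro x hx
        rcases mem_insert.1 hx with rfl | hxB
        · exact hσσ
        · exact htwo x hxB
      have haddH : ∀ x ∈ Hf, ∀ y ∈ Hf, x + y ∈ Hf := by
        intro x hx y hy
        by_cases hxy : x = y
        · subst hxy; rw [htorH x hx]; exact mem_insert_of_mem h0B
        · rcases mem_insert.1 hx with rfl | hxB
          · rcases mem_insert.1 hy with rfl | hyB
            · exact absurd rfl hxy
            · by_cases hy0 : y = 0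
              · subst hy0; rw [add_zero]; exact mem_insert_self _ _
              · rw [add_comm]; exact mem_insert_of_mem (hb y hyB hy0)
          · rcases mem_insert.1 hy with rfl | hyB
            · by_cases hx0 : x = 0
              · subst hx0; rw [zero_add]; exact mem_insert_self _ _
              · exact mem_insert_of_mem (hb x hxB hx0)
            · rcases H2 x hxB y hyB hxy with hmem | hmem
              · exact mem_insert_of_mem hmem
              · rw [hmem]; exact mem_insert_self _ _
      refine ⟨{ carrier := ↑Hf,
                add_mem' := fun {u v} hu hv => by
                  exact_mod_cast haddH u (by exact_mod_cast hu) v (by exact_mod_cast hv),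
                zero_mem' := by exact_mod_cast mem_insert_of_mem h0B,
                neg_mem' := fun {u} hu => by
                  have huH : u ∈ Hf := by exact_mod_cast hu
                  have hneg : -u = u := neg_eq_of_add_eq_zero_left (htorH u huH)
                  rw [hneg]; exact hu }, a0, a0 + σ, ?_, ?_, ?_⟩
      · intro x hx
        exact htorH x (by exact_mod_cast hx)
      · exact Set.mem_vadd_set.2 ⟨σ, by exact_mod_cast mem_insert_self σ B, rfl⟩
      · ext t
        simp only [Set.mem_diff, Set.mem_singleton_iff, Set.mem_vadd_set, mem_coe, vadd_eq_add,
          AddSubgroup.coe_set_mk]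
        constructor
        · intro htA
          have htA' : t ∈ A := by exact_mod_cast htA
          have htB : t + (-a0) ∈ B := mem_image_of_mem _ htA'
          constructor
          · exact ⟨t + (-a0), by exact_mod_cast mem_insert_of_mem htB, by abel⟩
          · intro hteq
            apply hσB
            have : t + (-a0) = σ := by rw [hteq]; abel
            exact this ▸ htB
        · rintro ⟨⟨u, huH, rfl⟩, hne⟩
          have huσ : u ≠ σ := fun h2 => hne (by rw [h2])
          have huHf : u ∈ Hf := by exact_mod_cast huH
          have huB : u ∈ B := (mem_insert.1 huHf).resolve_left huσ
          have huA := (hmemB u).1 huB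
          have : a0 + u ∈ A := by rw [add_comm]; exact huA
          exact_mod_cast this
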